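/- Let X and Y be independent random variables each with density f(x) = m^m/Γ(m) x^{m−1} e^{−mx} on (0,∞), with m > 0 real. Then Z = XY has density f_Z(z) = (2 m^{2m}/Γ(m)²) z^{m−1} K_0(2m√z) for z > 0, where K_0 is the modified Bessel function of the second kind of order 0. -/

import Mathlib

open MeasureTheory Real Set

/-- The law of a unit-mean Nakagami-m power gain. -/
noncomputable def nakLaw (m : ℝ) : Measure ℝ :=
  (volume.restrict (Ioi 0)).withDensity fun x =>
    ENNReal.ofReal (m ^ m / Real.Gamma m * x ^ (m - 1) * Real.exp (-m * x))

/-- K₀, the modified Bessel function of the second kind of order 0,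
via its integral representation K₀(x) = ∫_0^∞ e^{−x cosh t} dt. -/
noncomputable def besselK0 (x : ℝ) : ℝ :=
  ∫ t in Ioi (0:ℝ), Real.exp (-x * Real.cosh t)

open scoped ENNReal

namespace NakagamiAux

lemma besselK0_nonneg (x : ℝ) : 0 ≤ besselK0 x :=
  integral_nonneg fun _ => (Real.exp_pos _).le

lemma self_le_cosh {t : ℝ} (ht : 0 ≤ t) : t ≤ Real.cosh t := by
  have h := Real.add_one_le_exp (t/2)
  have h2 : Real.exp (t/2) * Real.exp (t/2) = Real.exp t := by
    rw [← Real.exp_add]; ring_nf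
  nlinarith [Real.exp_pos (-t), Real.cosh_eq t, sq_nonneg (1 - t/2), Real.exp_pos (t/2)]

lemma integrableOn_exp_cosh {a : ℝ} (ha : 0 < a) :
    IntegrableOn (fun t => Real.exp (-a * Real.cosh t)) (Ioi (0:ℝ)) := by
  apply Integrable.mono' (exp_neg_integrableOn_Ioi 0 ha)
  · exact (Real.continuous_exp.comp
      (continuous_const.mul Real.continuous_cosh)).aestronglyMeasurable
  · filter_upwards [ae_restrict_mem measurableSet_Ioi] with t ht
    rw [Real.norm_eq_abs, abs_of_pos (Real.exp_pos _)]
    apply Real.exp_le_exp.2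
    have := self_le_cosh (le_of_lt ht)
    nlinarith

lemma lintegral_ofReal_exp_cosh {a : ℝ} (ha : 0 < a) :
    ∫⁻ t in Ioi (0:ℝ), ENNReal.ofReal (Real.exp (-a * Real.cosh t)) =
      ENNReal.ofReal (besselK0 a) := by
  rw [besselK0, ofReal_integral_eq_lintegral_ofReal (integrableOn_exp_cosh ha)]
  filter_upwards with t using (Real.exp_pos _).le

lemma lintegral_Ioi_comp_exp (g : ℝ → ℝ≥0∞) :
    ∫⁻ x in Ioi (0:ℝ), g x = ∫⁻ u, ENNReal.ofReal (Real.exp u) * g (Real.exp u) := by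
  have h1 : Ioi (0:ℝ) = Real.exp '' univ := by rw [image_univ, Real.range_exp]
  rw [h1, lintegral_image_eq_lintegral_abs_det_fderiv_mul volume MeasurableSet.univ
    (f' := fun x => ContinuousLinearMap.smulRight (1 : ℝ →L[ℝ] ℝ) (Real.exp x))
    (fun x _ => (Real.hasDerivAt_exp x).hasFDerivAt.hasFDerivWithinAt)
    (Real.exp_injective.injOn), Measure.restrict_univ]
  simp only [ContinuousLinearMap.smulRight_one_eq_toSpanSingleton, ContinuousLinearMap.det_toSpanSingleton, abs_of_pos (Real.exp_pos _)]

lemma volume_restrict_Iio_neg :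
    (volume : Measure ℝ).restrict (Iio 0)
      = Measure.map Neg.neg ((volume : Measure ℝ).restrict (Ioi 0)) := by
  have := Measure.restrict_map (μ := (volume : Measure ℝ)) measurable_neg
      (measurableSet_Iio (a := (0:ℝ)))
  rw [Measure.map_neg_eq_self (volume : Measure ℝ)] at this
  rw [this]
  congr 1
  ext x; simp

lemma lintegral_even_eq_two_mul (h : ℝ → ℝ≥0∞) (hh : Measurable h)
    (he : ∀ x, h (-x) = h x) :
    ∫⁻ x, h x = 2 * ∫⁻ x in Ioi (0:ℝ), h x := by
  have hsplit : ∫⁻ x, h x = (∫⁻ x in Iio (0:ℝ), h x) + ∫⁻ x in Ioi (0:ℝ), h x := by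
    rw [← lintegral_add_compl h (measurableSet_Iio (a := (0:ℝ)))]
    congr 1
    rw [show (Iio (0:ℝ))ᶜ = Ici 0 by simp]
    exact (setLIntegral_congr Ioi_ae_eq_Ici).symm
  have hneg : (∫⁻ x in Iio (0:ℝ), h x) = ∫⁻ x in Ioi (0:ℝ), h x := by
    rw [volume_restrict_Iio_neg, lintegral_map hh measurable_neg]
    simp_rw [he]
  rw [hsplit, hneg, two_mul]

lemma lemmaA {m z : ℝ} (hm : 0 < m) (hz : 0 < z) :
    ∫⁻ x in Ioi (0:ℝ), ENNReal.ofReal (x⁻¹ * Real.exp (-(m * (x + z / x)))) =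
      2 * ENNReal.ofReal (besselK0 (2 * m * Real.sqrt z)) := by
  have hs : 0 < Real.sqrt z := Real.sqrt_pos.2 hz
  have ha : 0 < 2 * m * Real.sqrt z := by positivity
  rw [lintegral_Ioi_comp_exp]
  have step1 : ∀ u : ℝ, ENNReal.ofReal (Real.exp u) *
      ENNReal.ofReal ((Real.exp u)⁻¹ * Real.exp (-(m * (Real.exp u + z / Real.exp u))))
      = ENNReal.ofReal (Real.exp (-(m * (Real.exp u + z * Real.exp (-u))))) := by
    intro u
    rw [← ENNReal.ofReal_mul (Real.exp_pos u).le]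
    congr 1
    have h1 : z / Real.exp u = z * Real.exp (-u) := by
      rw [Real.exp_neg, div_eq_mul_inv]
    rw [← mul_assoc, mul_inv_cancel₀ (Real.exp_pos u).ne', one_mul, h1]
  simp_rw [step1]
  rw [← lintegral_add_right_eq_self
    (fun u => ENNReal.ofReal (Real.exp (-(m * (Real.exp u + z * Real.exp (-u))))))
    (Real.log (Real.sqrt z))]
  have step2 : ∀ t : ℝ,
      ENNReal.ofReal (Real.exp (-(m * (Real.exp (t + Real.log (Real.sqrt z))
        + z * Real.exp (-(t + Real.log (Real.sqrt z)))))))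
      = ENNReal.ofReal (Real.exp (-(2 * m * Real.sqrt z) * Real.cosh t)) := by
    intro t
    congr 1
    rw [Real.exp_add, Real.exp_log hs, neg_add, Real.exp_add, Real.exp_neg (Real.log _),
      Real.exp_log hs, Real.cosh_eq]
    have h2 : z * (Real.exp (-t) * (Real.sqrt z)⁻¹) = z / Real.sqrt z * Real.exp (-t) := by
      ring
    rw [h2, Real.div_sqrt]
    ring
  simp_rw [step2]
  rw [lintegral_even_eq_two_mul _ (by fun_prop) (fun x => by rw [Real.cosh_neg]),
    lintegral_ofReal_exp_cosh ha]

lemma lemmaA' {m z : ℝ} (hm : 0 < m) (hz : 0 < z) :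
    ∫⁻ x in Ioi (0:ℝ),
        (ENNReal.ofReal (m ^ m / Real.Gamma m * x ^ (m - 1) * Real.exp (-m * x))
          * ENNReal.ofReal x⁻¹
          * ENNReal.ofReal (m ^ m / Real.Gamma m * (z / x) ^ (m - 1)
              * Real.exp (-m * (z / x))))
      = ENNReal.ofReal (2 * m ^ (2 * m) / (Real.Gamma m) ^ 2 * z ^ (m - 1) *
          besselK0 (2 * m * Real.sqrt z)) := by
  have hG : 0 < Real.Gamma m := Real.Gamma_pos_of_pos hm
  have hmm : (0:ℝ) < m ^ m := Real.rpow_pos_of_pos hm m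
  have hK : (0:ℝ) ≤ m ^ (2 * m) / (Real.Gamma m) ^ 2 * z ^ (m - 1) := by positivity
  have hpt : ∀ x ∈ Ioi (0:ℝ),
      (ENNReal.ofReal (m ^ m / Real.Gamma m * x ^ (m - 1) * Real.exp (-m * x))
          * ENNReal.ofReal x⁻¹
          * ENNReal.ofReal (m ^ m / Real.Gamma m * (z / x) ^ (m - 1)
              * Real.exp (-m * (z / x))))
        = ENNReal.ofReal (m ^ (2 * m) / (Real.Gamma m) ^ 2 * z ^ (m - 1)) *
            ENNReal.ofReal (x⁻¹ * Real.exp (-(m * (x + z / x)))) := by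
    intro x hx
    rw [mem_Ioi] at hx
    have h1 : (0:ℝ) ≤ m ^ m / Real.Gamma m * x ^ (m - 1) * Real.exp (-m * x) := by
      have := Real.rpow_nonneg hx.le (m - 1); positivity
    rw [← ENNReal.ofReal_mul h1, ← ENNReal.ofReal_mul (by positivity),
      ← ENNReal.ofReal_mul hK]
    congr 1
    have he : Real.exp (-(m * (x + z / x))) = Real.exp (-m * x) * Real.exp (-m * (z / x)) := by
      rw [← Real.exp_add]; ring_nf
    have hpow : m ^ (2 * m) = m ^ m * m ^ m := by
      rw [← Real.rpow_add hm]; ring_nf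
    have hxp : x ^ (m - 1) ≠ 0 := (Real.rpow_pos_of_pos hx (m - 1)).ne'
    rw [he, hpow, Real.div_rpow hz.le hx.le]
    field_simp
  rw [setLIntegral_congr_fun_ae measurableSet_Ioi (Filter.Eventually.of_forall hpt),
    lintegral_const_mul' _ _ ENNReal.ofReal_ne_top, lemmaA hm hz]
  rw [show (2:ℝ≥0∞) = ENNReal.ofReal 2 by simp, ← ENNReal.ofReal_mul (by norm_num),
    ← ENNReal.ofReal_mul hK]
  congr 1
  ring

lemma measurable_fE (m : ℝ) : Measurable (fun x : ℝ =>
    ENNReal.ofReal (m ^ m / Real.Gamma m * x ^ (m - 1) * Real.exp (-m * x))) := by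
  fun_prop

lemma slice {m x : ℝ} (hx : 0 < x) {s : Set ℝ} (hs : MeasurableSet s) :
    nakLaw m ((fun y => x * y) ⁻¹' s)
      = ENNReal.ofReal x⁻¹ * ∫⁻ z in Ioi (0:ℝ) ∩ s,
          ENNReal.ofReal (m ^ m / Real.Gamma m * (z / x) ^ (m - 1)
            * Real.exp (-m * (z / x))) ∂volume := by
  set fE := fun y : ℝ =>
    ENNReal.ofReal (m ^ m / Real.Gamma m * y ^ (m - 1) * Real.exp (-m * y)) with hfE
  have hu : MeasurableSet ((fun y => x * y) ⁻¹' s) := hs.preimage (measurable_const_mul x)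
  have key : ∀ G : ℝ → ℝ≥0∞, Measurable G →
      ∫⁻ y, G y ∂volume = ENNReal.ofReal x⁻¹ * ∫⁻ z, G (x⁻¹ * z) ∂volume := by
    intro G hG
    have hmap : Measure.map (fun z : ℝ => x⁻¹ * z) volume
        = ENNReal.ofReal x • volume := by
      rw [Real.map_volume_mul_left (inv_ne_zero hx.ne'), inv_inv, abs_of_pos hx]
    have h1 : ∫⁻ z, G (x⁻¹ * z) ∂volume = ENNReal.ofReal x * ∫⁻ y, G y ∂volume := by
      rw [← lintegral_map hG (measurable_const_mul x⁻¹), hmap, lintegral_smul_measure, smul_eq_mul]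
    rw [h1, ← mul_assoc, ← ENNReal.ofReal_mul (by positivity),
      inv_mul_cancel₀ hx.ne', ENNReal.ofReal_one, one_mul]
  have hind : MeasurableSet ((fun y => x * y) ⁻¹' s ∩ Ioi 0) := hu.inter measurableSet_Ioi
  rw [show nakLaw m = (volume.restrict (Ioi 0)).withDensity fE from rfl,
    withDensity_apply _ hu, Measure.restrict_restrict hu,
    ← lintegral_indicator hind, key _ ((measurable_fE m).indicator hind)]
  congr 1
  rw [← lintegral_indicator (measurableSet_Ioi.inter hs)]
  congr 1
  funext z
  have hmem : (x⁻¹ * z ∈ ((fun y => x * y) ⁻¹' s ∩ Ioi 0)) ↔ z ∈ Ioi (0:ℝ) ∩ s := by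
    simp only [mem_inter_iff, mem_preimage, mem_Ioi, mul_inv_cancel_left₀ hx.ne']
    constructor
    · rintro ⟨h1, h2⟩
      have h3 := mul_pos hx h2
      rw [mul_inv_cancel_left₀ hx.ne'] at h3
      exact ⟨h3, h1⟩
    · rintro ⟨h1, h2⟩
      exact ⟨h2, mul_pos (inv_pos.2 hx) h1⟩
  by_cases hz : z ∈ Ioi (0:ℝ) ∩ s
  · rw [Set.indicator_of_mem (hmem.2 hz), Set.indicator_of_mem hz, inv_mul_eq_div]
  · rw [Set.indicator_of_notMem (fun h => hz (hmem.1 h)), Set.indicator_of_notMem hz]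

lemma mapmul {m : ℝ} (hm : 0 < m) [SFinite (nakLaw m)] :
    Measure.map (fun p : ℝ × ℝ => p.1 * p.2) ((nakLaw m).prod (nakLaw m)) =
      (volume.restrict (Ioi 0)).withDensity fun z =>
        ENNReal.ofReal (2 * m ^ (2 * m) / (Real.Gamma m) ^ 2 * z ^ (m - 1) *
          besselK0 (2 * m * Real.sqrt z)) := by
  set fE := fun y : ℝ =>
    ENNReal.ofReal (m ^ m / Real.Gamma m * y ^ (m - 1) * Real.exp (-m * y)) with hfE
  have hmul : Measurable (fun p : ℝ × ℝ => p.1 * p.2) := measurable_fst.mul measurable_snd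
  ext s hs
  rw [Measure.map_apply hmul hs, Measure.prod_apply (hmul hs)]
  have hpre : ∀ x : ℝ, (Prod.mk x ⁻¹' ((fun p : ℝ × ℝ => p.1 * p.2) ⁻¹' s))
      = (fun y => x * y) ⁻¹' s := fun x => rfl
  simp_rw [hpre]
  have hslicemeas : Measurable fun x => nakLaw m ((fun y => x * y) ⁻¹' s) := by
    have := measurable_measure_prodMk_left (ν := nakLaw m) (hmul hs)
    simpa [hpre] using this
  have houter : ∫⁻ x, nakLaw m ((fun y => x * y) ⁻¹' s) ∂(nakLaw m)
      = ∫⁻ x in Ioi (0:ℝ), fE x * nakLaw m ((fun y => x * y) ⁻¹' s) ∂volume := by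
    have hfEm : Measurable fE := measurable_fE m
    have hslicemeas' : Measurable fun x =>
        ((volume.restrict (Ioi (0:ℝ))).withDensity fE) ((fun y => x * y) ⁻¹' s) := hslicemeas
    rw [show nakLaw m = (volume.restrict (Ioi 0)).withDensity fE from rfl,
      lintegral_withDensity_eq_lintegral_mul _ hfEm hslicemeas']
    rfl
  rw [houter]
  have hstep : ∀ x ∈ Ioi (0:ℝ), fE x * nakLaw m ((fun y => x * y) ⁻¹' s)
      = ∫⁻ z in Ioi (0:ℝ) ∩ s, fE x * ENNReal.ofReal x⁻¹ * fE (z / x) ∂volume := by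
    intro x hx
    rw [mem_Ioi] at hx
    rw [slice hx hs, ← mul_assoc, lintegral_const_mul' _ _
      (ENNReal.mul_ne_top ENNReal.ofReal_ne_top ENNReal.ofReal_ne_top)]
  rw [setLIntegral_congr_fun_ae measurableSet_Ioi (Filter.Eventually.of_forall hstep)]
  have hswap : ∫⁻ x in Ioi (0:ℝ), (∫⁻ z in Ioi (0:ℝ) ∩ s,
        fE x * ENNReal.ofReal x⁻¹ * fE (z / x) ∂volume) ∂volume
      = ∫⁻ z in Ioi (0:ℝ) ∩ s, (∫⁻ x in Ioi (0:ℝ),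
        fE x * ENNReal.ofReal x⁻¹ * fE (z / x) ∂volume) ∂volume := by
    apply lintegral_lintegral_swap
    apply Measurable.aemeasurable
    apply Measurable.fun_mul
    · exact ((measurable_fE m).comp measurable_fst).mul
        (measurable_fst.inv.ennreal_ofReal)
    · exact (measurable_fE m).comp (measurable_snd.div measurable_fst)
  rw [hswap]
  have hinner : ∀ z ∈ Ioi (0:ℝ) ∩ s,
      (∫⁻ x in Ioi (0:ℝ), fE x * ENNReal.ofReal x⁻¹ * fE (z / x) ∂volume)
        = ENNReal.ofReal (2 * m ^ (2 * m) / (Real.Gamma m) ^ 2 * z ^ (m - 1) *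
            besselK0 (2 * m * Real.sqrt z)) := by
    intro z hz
    exact lemmaA' hm hz.1
  rw [setLIntegral_congr_fun_ae (measurableSet_Ioi.inter hs)
    (Filter.Eventually.of_forall hinner),
    withDensity_apply _ hs, Measure.restrict_restrict hs, inter_comm]

end NakagamiAux

/-- Lemma 2: the product Z = XY of two independent Nakagami-m power gains has density
f_Z(z) = (2 m^{2m}/Γ(m)²) z^{m−1} K₀(2m√z) on (0,∞). -/
theorem product_nakagami_density {Ω : Type*} [MeasurableSpace Ω]
    (P : Measure Ω) [IsProbabilityMeasure P] (m : ℝ) (hm : 0 < m)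
    (X Y : Ω → ℝ) (hXmeas : Measurable X) (hYmeas : Measurable Y)
    (hindep : ProbabilityTheory.IndepFun X Y P)
    (hX : Measure.map X P = nakLaw m) (hY : Measure.map Y P = nakLaw m) :
    Measure.map (fun ω => X ω * Y ω) P =
      (volume.restrict (Ioi 0)).withDensity fun z =>
        ENNReal.ofReal (2 * m ^ (2 * m) / (Real.Gamma m) ^ 2 * z ^ (m - 1) *
          besselK0 (2 * m * Real.sqrt z)) := by
  haveI hprob : IsProbabilityMeasure (nakLaw m) := by
    rw [← hX]; exact Measure.isProbabilityMeasure_map hXmeas.aemeasurable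
  have hmap : Measure.map (fun ω => (X ω, Y ω)) P = (nakLaw m).prod (nakLaw m) := by
    have h := (ProbabilityTheory.indepFun_iff_map_prod_eq_prod_map_map
      hXmeas.aemeasurable hYmeas.aemeasurable).1 hindep
    rw [hX, hY] at h
    exact h
  have hmul : Measurable (fun p : ℝ × ℝ => p.1 * p.2) := measurable_fst.mul measurable_snd
  have hcomp : Measure.map (fun ω => X ω * Y ω) P
      = Measure.map (fun p : ℝ × ℝ => p.1 * p.2) ((nakLaw m).prod (nakLaw m)) := by
    rw [← hmap, Measure.map_map hmul (hXmeas.prodMk hYmeas)]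
    rfl
  rw [hcomp, NakagamiAux.mapmul hm]
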